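/- For every non-negative integer n, 4^n equals the sum over i from 0 to n of binom(2i, i) * binom(2(n-i), n-i). -/

import Mathlib

open Finset Nat

private lemma hajos_key (n : ℕ) :
    (n + 1) * ∑ i ∈ range (n + 2), centralBinom i * centralBinom (n + 1 - i) =
    (4 * (n + 1)) * ∑ i ∈ range (n + 1), centralBinom i * centralBinom (n - i) := by
  have h1 : (n + 1) * ∑ i ∈ range (n + 2), centralBinom i * centralBinom (n + 1 - i)
      = (∑ i ∈ range (n + 2), i * (centralBinom i * centralBinom (n + 1 - i)))
      + ∑ i ∈ range (n + 2), (n + 1 - i) * (centralBinom i * centralBinom (n + 1 - i)) := by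
    rw [Finset.mul_sum, ← Finset.sum_add_distrib]
    refine Finset.sum_congr rfl fun i hi => ?_
    have : i ≤ n + 1 := by simpa [Nat.lt_succ_iff] using Finset.mem_range.mp hi
    rw [← add_mul]
    congr 1
    omega
  have h2 : (∑ i ∈ range (n + 2), i * (centralBinom i * centralBinom (n + 1 - i)))
      = ∑ i ∈ range (n + 1), (2 * (2 * i + 1)) * (centralBinom i * centralBinom (n - i)) := by
    rw [Finset.sum_range_succ']
    simp only [Nat.zero_mul, add_zero]
    refine Finset.sum_congr rfl fun i hi => ?_
    have hc := Nat.succ_mul_centralBinom_succ i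
    have hs : n + 1 - (i + 1) = n - i := by omega
    rw [hs]
    calc (i + 1) * (centralBinom (i + 1) * centralBinom (n - i))
        = ((i + 1) * centralBinom (i + 1)) * centralBinom (n - i) := by ring
      _ = (2 * (2 * i + 1) * centralBinom i) * centralBinom (n - i) := by rw [hc]
      _ = (2 * (2 * i + 1)) * (centralBinom i * centralBinom (n - i)) := by ring
  have h3 : (∑ i ∈ range (n + 2), (n + 1 - i) * (centralBinom i * centralBinom (n + 1 - i)))
      = ∑ i ∈ range (n + 1), (2 * (2 * (n - i) + 1)) * (centralBinom i * centralBinom (n - i)) := by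
    rw [Finset.sum_range_succ]
    simp only [Nat.sub_self, Nat.zero_mul, add_zero]
    refine Finset.sum_congr rfl fun i hi => ?_
    have hin : i ≤ n := by simpa [Nat.lt_succ_iff] using Finset.mem_range.mp hi
    have hc := Nat.succ_mul_centralBinom_succ (n - i)
    have hs : n + 1 - i = (n - i) + 1 := by omega
    rw [hs]
    calc ((n - i) + 1) * (centralBinom i * centralBinom ((n - i) + 1))
        = centralBinom i * (((n - i) + 1) * centralBinom ((n - i) + 1)) := by ring
      _ = centralBinom i * (2 * (2 * (n - i) + 1) * centralBinom (n - i)) := by rw [hc]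
      _ = (2 * (2 * (n - i) + 1)) * (centralBinom i * centralBinom (n - i)) := by ring
  rw [h1, h2, h3, ← Finset.sum_add_distrib, Finset.mul_sum]
  refine Finset.sum_congr rfl fun i hi => ?_
  have hin : i ≤ n := by simpa [Nat.lt_succ_iff] using Finset.mem_range.mp hi
  have he : 2 * (2 * i + 1) + 2 * (2 * (n - i) + 1) = 4 * (n + 1) := by omega
  rw [← add_mul, he, mul_assoc]

theorem hajos_identity (n : ℕ) :
    4 ^ n = ∑ i ∈ Finset.range (n + 1),
      Nat.choose (2 * i) i * Nat.choose (2 * (n - i)) (n - i) := by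
  have key : ∀ m : ℕ, 4 ^ m = ∑ i ∈ range (m + 1), centralBinom i * centralBinom (m - i) := by
    intro m
    induction m with
    | zero => simp [centralBinom]
    | succ k ih =>
      have h := hajos_key k
      rw [← ih] at h
      have h2 : (k + 1) * ∑ i ∈ range (k + 2), centralBinom i * centralBinom (k + 1 - i)
          = (k + 1) * 4 ^ (k + 1) := by rw [h]; ring
      exact (Nat.eq_of_mul_eq_mul_left (by omega) h2).symm
  simpa [centralBinom] using key n
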